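/- arXiv:2504.15727 — 2 statements merged into one kernel-verified Lean document; each statement's English description precedes it below -/
import Mathlib

section
/- Let D⁰ be a set with a distinguished element 0, let A ⊆ D⁰ ∖ {0}, and define the operation ⊣ on D⁰ by: x ⊣ y = x if y ∈ A, and x ⊣ y = 0 if y ∉ A. Then ⊣ is associative and right commutative, 0 is a zero of (D⁰,⊣), and a bijection f : D⁰ → D⁰ is an automorphism of (D⁰,⊣) if and only if f(0) = 0 and f(A) = A; hence the automorphism group of LO^{∼0}_{A←D} = (D⁰,⊣) is isomorphic to S_A × S_{D∖A} where D = D⁰ ∖ {0}. -/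
/-- A dimonoid: two associative operations `ld` (⊣) and `rd` (⊢) satisfying
axioms (D1), (D2), (D3). -/
def IsDimonoid {D : Type*} (ld rd : D → D → D) : Prop :=
  (∀ x y z, ld (ld x y) z = ld x (ld y z)) ∧
  (∀ x y z, rd (rd x y) z = rd x (rd y z)) ∧
  (∀ x y z, ld (ld x y) z = ld x (rd y z)) ∧
  (∀ x y z, ld (rd x y) z = rd x (ld y z)) ∧
  (∀ x y z, rd (ld x y) z = rd x (rd y z))

/-- The automorphism group of a magma `(D, op)`, as a subgroup of `Equiv.Perm D`. -/
def semigroupAutGroup {D : Type*} (op : D → D → D) : Subgroup (Equiv.Perm D) where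
  carrier := {f : Equiv.Perm D | ∀ x y, f (op x y) = op (f x) (f y)}
  one_mem' := fun _ _ => rfl
  mul_mem' := by
    intro f g hf hg
    simp only [Set.mem_setOf_eq] at hf hg ⊢
    intro x y
    simp [Equiv.Perm.mul_apply, hg, hf]
  inv_mem' := by
    intro f hf
    simp only [Set.mem_setOf_eq] at hf ⊢
    intro x y
    apply f.injective
    simp [hf]

/-- The automorphism group of a dimonoid `(D, ld, rd)`. -/
def dimonoidAutGroup {D : Type*} (ld rd : D → D → D) : Subgroup (Equiv.Perm D) :=
  semigroupAutGroup ld ⊓ semigroupAutGroup rd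

open scoped Classical in
/-- Glue two permutations of disjoint sets into a function. -/
noncomputable def glueFun {D0 : Type*} (A B : Set D0) (f : Equiv.Perm ↥A) (g : Equiv.Perm ↥B) :
    D0 → D0 :=
  fun x => if h : x ∈ A then (f ⟨x, h⟩ : D0) else if h2 : x ∈ B then (g ⟨x, h2⟩ : D0) else x

lemma glueFun_memA {D0 : Type*} (A B : Set D0) (f : Equiv.Perm ↥A) (g : Equiv.Perm ↥B)
    {x : D0} (h : x ∈ A) : glueFun A B f g x = (f ⟨x, h⟩ : D0) := by
  simp only [glueFun]; rw [dif_pos h]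

lemma glueFun_memB {D0 : Type*} (A B : Set D0) (f : Equiv.Perm ↥A) (g : Equiv.Perm ↥B)
    {x : D0} (h : x ∉ A) (h2 : x ∈ B) : glueFun A B f g x = (g ⟨x, h2⟩ : D0) := by
  simp only [glueFun]; rw [dif_neg h, dif_pos h2]

lemma glueFun_nmem {D0 : Type*} (A B : Set D0) (f : Equiv.Perm ↥A) (g : Equiv.Perm ↥B)
    {x : D0} (h : x ∉ A) (h2 : x ∉ B) : glueFun A B f g x = x := by
  simp only [glueFun]; rw [dif_neg h, dif_neg h2]

lemma glueFun_leftInv {D0 : Type*} (A B : Set D0) (hd : ∀ x ∈ B, x ∉ A)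
    (f : Equiv.Perm ↥A) (g : Equiv.Perm ↥B) :
    Function.LeftInverse (glueFun A B f.symm g.symm) (glueFun A B f g) := by
  intro x
  by_cases h : x ∈ A
  · rw [glueFun_memA A B f g h, glueFun_memA A B f.symm g.symm (f ⟨x, h⟩).2]
    show ((f.symm (f ⟨x, h⟩) : ↥A) : D0) = x
    rw [Equiv.symm_apply_apply]
  · by_cases h2 : x ∈ B
    · rw [glueFun_memB A B f g h h2,
        glueFun_memB A B f.symm g.symm (hd _ (g ⟨x, h2⟩).2) (g ⟨x, h2⟩).2]
      show ((g.symm (g ⟨x, h2⟩) : ↥B) : D0) = x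
      rw [Equiv.symm_apply_apply]
    · rw [glueFun_nmem A B f g h h2, glueFun_nmem A B f.symm g.symm h h2]

/-- Glue two permutations of disjoint sets into a permutation. -/
noncomputable def glueEquiv {D0 : Type*} (A B : Set D0) (hd : ∀ x ∈ B, x ∉ A)
    (f : Equiv.Perm ↥A) (g : Equiv.Perm ↥B) : Equiv.Perm D0 where
  toFun := glueFun A B f g
  invFun := glueFun A B f.symm g.symm
  left_inv := glueFun_leftInv A B hd f g
  right_inv := by
    have := glueFun_leftInv A B hd f.symm g.symm
    simp only [Equiv.symm_symm] at this; exact this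
/-- For a set `D⁰` with distinguished element `0` and `A ⊆ D⁰ ∖ {0}`, the
semigroup `LO^{∼0}_{A←D}` with `x ⊣ y = x` for `y ∈ A` and `x ⊣ y = 0` for
`y ∉ A` is associative and right commutative, has `0` as a zero; its
automorphisms are exactly the bijections `f` with `f(0) = 0` and `f(A) = A`,
and its automorphism group is isomorphic to `S_A × S_{D∖A}`. -/
theorem LO_tilde0_A_D_semigroup {D0 : Type*} (z : D0) (A : Set D0)
    (hA : A ⊆ ({z} : Set D0)ᶜ) (ld : D0 → D0 → D0)
    (hld1 : ∀ x y, y ∈ A → ld x y = x)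
    (hld2 : ∀ x y, y ∉ A → ld x y = z) :
    (∀ x y zz, ld (ld x y) zz = ld x (ld y zz)) ∧
    (∀ s x y, ld (ld s x) y = ld (ld s y) x) ∧
    (∀ s, ld z s = z ∧ ld s z = z) ∧
    (∀ f : Equiv.Perm D0,
      (∀ x y, f (ld x y) = ld (f x) (f y)) ↔ (f z = z ∧ ⇑f '' A = A)) ∧
    Nonempty (↥(semigroupAutGroup ld) ≃* Equiv.Perm ↥A × Equiv.Perm ↥(({z} : Set D0)ᶜ \ A)) := by

  have hzA : z ∉ A := fun h => hA h rfl
  have hchar : ∀ f : Equiv.Perm D0,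
      (∀ x y, f (ld x y) = ld (f x) (f y)) ↔ (f z = z ∧ ⇑f '' A = A) := by
    intro f
    constructor
    · intro hf
      have hfz : f z = z := by
        by_cases h : f z ∈ A
        · exfalso
          have key : ∀ x, f z = f x := by
            intro x
            have h1 := hf x z
            rwa [hld2 x z hzA, hld1 (f x) (f z) h] at h1
          have h2 : z = f z := f.injective (key (f z))
          exact hA h h2.symm
        · have h1 := hf z z
          rwa [hld2 z z hzA, hld2 (f z) (f z) h] at h1
      refine ⟨hfz, ?_⟩
      apply Set.eq_of_subset_of_subset
      · rintro y ⟨a, ha, rfl⟩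
        by_contra hfa
        have key : ∀ x, f x = z := by
          intro x
          have h1 := hf x a
          rwa [hld1 x a ha, hld2 (f x) (f a) hfa] at h1
        have h2 := key (f.symm a)
        rw [f.apply_symm_apply] at h2
        exact hA ha h2
      · intro a ha
        refine ⟨f.symm a, ?_, f.apply_symm_apply a⟩
        by_contra h
        have key : ∀ x, x = z := by
          intro x
          have h1 := hf x (f.symm a)
          rw [hld2 x _ h, f.apply_symm_apply, hld1 (f x) a ha] at h1
          exact (f.injective h1).symm
        exact hA ha (key a)
    · rintro ⟨h0, hImA⟩ x y
      have key : y ∈ A ↔ f y ∈ A := by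
        constructor
        · intro hy; rw [← hImA]; exact ⟨y, hy, rfl⟩
        · intro hy
          rw [← hImA] at hy
          obtain ⟨a, ha, hfa⟩ := hy
          rwa [← f.injective hfa]
      by_cases hy : y ∈ A
      · rw [hld1 x y hy, hld1 (f x) (f y) (key.mp hy)]
      · rw [hld2 x y hy, hld2 (f x) (f y) (fun h => hy (key.mpr h)), h0]
  refine ⟨?_, ?_, ?_, hchar, ?_⟩
  · intro x y w
    by_cases hw : w ∈ A
    · rw [hld1 _ _ hw, hld1 _ _ hw]
    · rw [hld2 _ _ hw, hld2 _ _ hw, hld2 _ _ hzA]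
  · intro s x y
    by_cases hx : x ∈ A <;> by_cases hy : y ∈ A
    · have e1 : ld (ld s x) y = s := by rw [hld1 s x hx, hld1 s y hy]
      have e2 : ld (ld s y) x = s := by rw [hld1 s y hy, hld1 s x hx]
      rw [e1, e2]
    · have e1 : ld (ld s x) y = z := by rw [hld1 s x hx, hld2 s y hy]
      have e2 : ld (ld s y) x = z := by rw [hld2 s y hy, hld1 z x hx]
      rw [e1, e2]
    · have e1 : ld (ld s x) y = z := by rw [hld2 s x hx, hld1 z y hy]
      have e2 : ld (ld s y) x = z := by rw [hld1 s y hy, hld2 s x hx]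
      rw [e1, e2]
    · have e1 : ld (ld s x) y = z := by rw [hld2 s x hx, hld2 z y hy]
      have e2 : ld (ld s y) x = z := by rw [hld2 s y hy, hld2 z x hx]
      rw [e1, e2]
  · intro s
    constructor
    · by_cases hs : s ∈ A
      · rw [hld1 _ _ hs]
      · rw [hld2 _ _ hs]
    · rw [hld2 _ _ hzA]
  · -- the automorphism group is isomorphic to S_A × S_B
    set B : Set D0 := ({z} : Set D0)ᶜ \ A with hBdef
    have hd : ∀ x ∈ B, x ∉ A := fun x hx => hx.2
    have hzB : z ∉ B := fun h => h.1 rfl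
    have hmemB : ∀ x : D0, x ∈ B ↔ (x ≠ z ∧ x ∉ A) := by
      intro x
      simp [hBdef, Set.mem_diff, Set.mem_compl_iff, Set.mem_singleton_iff, and_comm]
    have hmem : ∀ e : Equiv.Perm D0,
        e ∈ semigroupAutGroup ld ↔ ∀ x y, e (ld x y) = ld (e x) (e y) := fun e => Iff.rfl
    have hzfix : ∀ h : ↥(semigroupAutGroup ld), (h : Equiv.Perm D0) z = z :=
      fun h => ((hchar h.1).mp h.2).1
    have hAiff : ∀ h : ↥(semigroupAutGroup ld), ∀ x,
        x ∈ A ↔ (h : Equiv.Perm D0) x ∈ A := by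
      intro h x
      have hImA := ((hchar h.1).mp h.2).2
      constructor
      · intro hx; rw [← hImA]; exact ⟨x, hx, rfl⟩
      · intro hx
        rw [← hImA] at hx
        obtain ⟨a, ha, hfa⟩ := hx
        rwa [← h.1.injective hfa]
    have hBiff : ∀ h : ↥(semigroupAutGroup ld), ∀ x,
        x ∈ B ↔ (h : Equiv.Perm D0) x ∈ B := by
      intro h x
      rw [hmemB, hmemB]
      constructor
      · rintro ⟨hxz, hxA⟩
        exact ⟨fun he => hxz (h.1.injective (he.trans (hzfix h).symm)),
          fun hc => hxA ((hAiff h x).mpr hc)⟩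
      · rintro ⟨hxz, hxA⟩
        exact ⟨fun he => hxz (by rw [he, hzfix h]), fun hc => hxA ((hAiff h x).mp hc)⟩
    let Phi : ↥(semigroupAutGroup ld) →* Equiv.Perm ↥A × Equiv.Perm ↥B :=
      MonoidHom.mk' (fun h =>
        ((h : Equiv.Perm D0).subtypePerm (fun x => (hAiff h x).symm),
         (h : Equiv.Perm D0).subtypePerm (fun x => (hBiff h x).symm)))
        (by
          intro h1 h2
          refine Prod.ext ?_ ?_ <;> · ext x; rfl)
    have hbij : Function.Bijective Phi := by
      constructor
      · intro h1 h2 heq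
        have e1 := congrArg Prod.fst heq
        have e2 := congrArg Prod.snd heq
        apply Subtype.ext
        apply Equiv.ext
        intro x
        by_cases hx : x ∈ A
        · exact congrArg (fun p => ((p ⟨x, hx⟩ : ↥A) : D0)) e1
        · by_cases hx2 : x ∈ B
          · exact congrArg (fun p => ((p ⟨x, hx2⟩ : ↥B) : D0)) e2
          · have hx3 : x = z := by
              by_contra hne
              exact hx2 ((hmemB x).mpr ⟨hne, hx⟩)
            rw [hx3, hzfix h1, hzfix h2]
      · rintro ⟨f, g⟩
        have hglue_mem : glueEquiv A B hd f g ∈ semigroupAutGroup ld := by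
          rw [hmem, hchar]
          constructor
          · show glueFun A B f g z = z
            exact glueFun_nmem A B f g hzA hzB
          · apply Set.eq_of_subset_of_subset
            · rintro y ⟨a, ha, rfl⟩
              show glueFun A B f g a ∈ A
              rw [glueFun_memA A B f g ha]
              exact (f ⟨a, ha⟩).2
            · intro a ha
              refine ⟨((f.symm ⟨a, ha⟩ : ↥A) : D0), (f.symm ⟨a, ha⟩).2, ?_⟩
              show glueFun A B f g _ = a
              rw [glueFun_memA A B f g (f.symm ⟨a, ha⟩).2]
              show ((f (f.symm ⟨a, ha⟩) : ↥A) : D0) = a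
              rw [f.apply_symm_apply]
        refine ⟨⟨glueEquiv A B hd f g, hglue_mem⟩, ?_⟩
        refine Prod.ext ?_ ?_
        · apply Equiv.ext
          intro x
          apply Subtype.ext
          show glueFun A B f g (x : D0) = ((f x : ↥A) : D0)
          rw [glueFun_memA A B f g x.2]
        · apply Equiv.ext
          intro x
          apply Subtype.ext
          show glueFun A B f g (x : D0) = ((g x : ↥B) : D0)
          rw [glueFun_memB A B f g (hd _ x.2) x.2]
    exact ⟨MulEquiv.ofBijective Phi hbij⟩
end

section
/- Let D⁰ be a set with a distinguished element 0, set D = D⁰ ∖ {0} with |D| > 1, and let a ∈ D. Define two operations on D⁰ by: x ⊣ y = x if y = a, and x ⊣ y = 0 if y ≠ a; and x ⊢ y = a if x = y = a, and x ⊢ y = 0 otherwise. Then (D⁰,⊣,⊢) is a dimonoid which is nonabelian and noncommutative, has empty halo (no bar-units), and a bijection f : D⁰ → D⁰ is an automorphism of (D⁰,⊣,⊢) if and only if f(0) = 0 and f(a) = a; hence its automorphism group is isomorphic to S_{D∖{a}}. -/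
/-- The dimonoid `LO^{∼0}_{{a}←D} ⋈ O^{{a}}_{D⁰}` (on `D⁰ = D ∪ {0}` with
`|D| > 1`, `a ∈ D`): with `x ⊣ y = x` if `y = a`, `x ⊣ y = 0` otherwise, and
`x ⊢ y = a` if `x = y = a`, `x ⊢ y = 0` otherwise, one gets a nonabelian
noncommutative dimonoid with empty halo, whose automorphisms are exactly the
bijections fixing `0` and `a`, so its automorphism group is isomorphic to
`S_{D∖{a}}`. -/
theorem LO_tilde0_a_null_dimonoid {D0 : Type*} (z a : D0) (haz : a ≠ z)
    (hD : ∃ b : D0, b ≠ z ∧ b ≠ a) (ld rd : D0 → D0 → D0)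
    (hld1 : ∀ x, ld x a = x)
    (hld2 : ∀ x y, y ≠ a → ld x y = z)
    (hrd1 : rd a a = a)
    (hrd2 : ∀ x y, ¬ (x = a ∧ y = a) → rd x y = z) :
    IsDimonoid ld rd ∧
    (¬ ∀ x y, ld x y = rd y x) ∧
    (¬ ((∀ x y, ld x y = ld y x) ∧ (∀ x y, rd x y = rd y x))) ∧
    (¬ ∃ e : D0, ∀ d, rd e d = d ∧ ld d e = d) ∧
    (∀ f : Equiv.Perm D0,
      ((∀ x y, f (ld x y) = ld (f x) (f y)) ∧ (∀ x y, f (rd x y) = rd (f x) (f y))) ↔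
      (f z = z ∧ f a = a)) ∧
    Nonempty (↥(dimonoidAutGroup ld rd) ≃* Equiv.Perm ↥(({z, a} : Set D0)ᶜ)) := by
  classical
  obtain ⟨b, hbz, hba⟩ := hD
  have hld_a_iff : ∀ x y : D0, ld x y = a ↔ (x = a ∧ y = a) := by
    intro x y
    constructor
    · intro h
      by_cases hy : y = a
      · rw [hy, hld1] at h; exact ⟨h, hy⟩
      · rw [hld2 x y hy] at h; exact absurd h.symm haz
    · rintro ⟨hx, hy⟩; rw [hx, hy]; exact hld1 a
  have hrd_a_iff : ∀ x y : D0, rd x y = a ↔ (x = a ∧ y = a) := by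
    intro x y
    constructor
    · intro h
      by_cases hx : x = a ∧ y = a
      · exact hx
      · rw [hrd2 x y hx] at h; exact absurd h.symm haz
    · rintro ⟨hx, hy⟩; rw [hx, hy]; exact hrd1
  have hdim : IsDimonoid ld rd := by
    refine ⟨?_, ?_, ?_, ?_, ?_⟩
    · intro x y w
      by_cases hw : w = a
      · rw [hw, hld1, hld1]
      · rw [hld2 _ _ hw, hld2 _ _ hw, hld2 _ _ (fun h => haz h.symm)]
    · intro x y w
      by_cases h : x = a ∧ y = a ∧ w = a
      · obtain ⟨hx, hy, hw⟩ := h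
        rw [hx, hy, hw, hrd1]
      · have h1 : rd (rd x y) w = z := by
          by_cases hxy : x = a ∧ y = a
          · refine hrd2 _ _ ?_
            rintro ⟨_, hw⟩; exact h ⟨hxy.1, hxy.2, hw⟩
          · rw [hrd2 _ _ hxy]
            exact hrd2 _ _ (fun hh => haz hh.1.symm)
        have h2 : rd x (rd y w) = z := by
          by_cases hyw : y = a ∧ w = a
          · refine hrd2 _ _ ?_
            rintro ⟨hx, _⟩; exact h ⟨hx, hyw.1, hyw.2⟩
          · rw [hrd2 _ _ hyw]
            exact hrd2 _ _ (fun hh => haz hh.2.symm)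
        rw [h1, h2]
    · -- (D1)
      intro x y w
      by_cases h : y = a ∧ w = a
      · obtain ⟨hy, hw⟩ := h
        rw [hy, hw, hrd1, hld1]
      · have h2 : ld x (rd y w) = z := by
          rw [hrd2 _ _ h]; exact hld2 _ _ (fun hh => haz hh.symm)
        rw [h2]
        by_cases hw : w = a
        · rw [hw, hld1]
          exact hld2 _ _ (fun hy => h ⟨hy, hw⟩)
        · exact hld2 _ _ hw
    · -- (D2)
      intro x y w
      by_cases hw : w = a
      · rw [hw, hld1, hld1]
      · rw [hld2 _ _ hw, hld2 _ _ hw]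
        exact (hrd2 _ _ (fun hh => haz hh.2.symm)).symm
    · -- (D3)
      intro x y w
      by_cases h : x = a ∧ y = a ∧ w = a
      · obtain ⟨hx, hy, hw⟩ := h
        rw [hx, hy, hw, hld1, hrd1, hrd1]
      · have h1 : rd (ld x y) w = z := by
          refine hrd2 _ _ ?_
          rintro ⟨hxy, hw⟩
          obtain ⟨hx, hy⟩ := (hld_a_iff x y).mp hxy
          exact h ⟨hx, hy, hw⟩
        have h2 : rd x (rd y w) = z := by
          by_cases hyw : y = a ∧ w = a
          · refine hrd2 _ _ ?_
            rintro ⟨hx, _⟩; exact h ⟨hx, hyw.1, hyw.2⟩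
          · rw [hrd2 _ _ hyw]
            exact hrd2 _ _ (fun hh => haz hh.2.symm)
        rw [h1, h2]
  have hchar : ∀ f : Equiv.Perm D0,
      ((∀ x y, f (ld x y) = ld (f x) (f y)) ∧ (∀ x y, f (rd x y) = rd (f x) (f y))) ↔
      (f z = z ∧ f a = a) := by
    intro f
    constructor
    · rintro ⟨hfl, hfr⟩
      have hzz : rd z z = z := hrd2 _ _ (fun hh => haz hh.1.symm)
      have hfz := hfr z z
      rw [hzz] at hfz
      have hfa2 := hfr a a
      rw [hrd1] at hfa2
      have hfzne : f z ≠ a := by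
        intro hza
        have hfaa : f a ≠ a := fun h => haz (f.injective (h.trans hza.symm))
        have hfaz : f a = z := by
          rw [hfa2]; exact hrd2 _ _ (fun hh => hfaa hh.1)
        have hfb := hfl b a
        rw [hld1] at hfb
        have hfbz : f b = z := by
          rw [hfb, hfaz]; exact hld2 _ _ (fun hh => haz hh.symm)
        exact hba (f.injective (hfbz.trans hfaz.symm))
      have hfzz : f z = z := by
        rw [hfz]; exact hrd2 _ _ (fun hh => hfzne hh.1)
      refine ⟨hfzz, ?_⟩
      by_contra hfaa
      have hfaz : f a = z := by
        rw [hfa2]; exact hrd2 _ _ (fun hh => hfaa hh.1)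
      exact haz (f.injective (hfaz.trans hfzz.symm))
    · rintro ⟨hfz, hfa⟩
      have hinj : ∀ x : D0, f x = a ↔ x = a := by
        intro x
        constructor
        · intro h; exact f.injective (h.trans hfa.symm)
        · intro h; rw [h, hfa]
      constructor
      · intro x y
        by_cases hy : y = a
        · rw [hy, hld1, hfa, hld1]
        · rw [hld2 _ _ hy, hfz, hld2 _ _ (fun h => hy ((hinj y).mp h))]
      · intro x y
        by_cases h : x = a ∧ y = a
        · obtain ⟨hx, hy⟩ := h
          rw [hx, hy, hrd1, hfa, hrd1]
        · rw [hrd2 _ _ h, hfz, hrd2]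
          rintro ⟨hx, hy⟩
          exact h ⟨(hinj x).mp hx, (hinj y).mp hy⟩
  refine ⟨hdim, ?_, ?_, ?_, hchar, ?_⟩
  · intro h
    have := h b a
    rw [hld1, hrd2 _ _ (fun hh => hba hh.2)] at this
    exact hbz this
  · rintro ⟨hl, _⟩
    have := hl b a
    rw [hld1, hld2 _ _ hba] at this
    exact hbz this
  · rintro ⟨e, he⟩
    have := (he b).1
    rw [hrd2 _ _ (fun hh => hba hh.2)] at this
    exact hbz this.symm
  · -- the isomorphism with the permutation group of the complement
    set S : Set D0 := ({z, a} : Set D0)ᶜ with hS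
    have hmem : ∀ f : Equiv.Perm D0, f ∈ dimonoidAutGroup ld rd ↔ (f z = z ∧ f a = a) := by
      intro f
      rw [← hchar f, dimonoidAutGroup, Subgroup.mem_inf]
      exact Iff.rfl
    have hpres : ∀ f : Equiv.Perm D0, f ∈ dimonoidAutGroup ld rd →
        ∀ x : D0, x ∈ S ↔ f x ∈ S := by
      intro f hf x
      obtain ⟨hfz, hfa⟩ := (hmem f).mp hf
      simp only [hS, Set.mem_compl_iff, Set.mem_insert_iff, Set.mem_singleton_iff, not_or]
      constructor
      · rintro ⟨h1, h2⟩
        exact ⟨fun h => h1 (f.injective (h.trans hfz.symm)),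
               fun h => h2 (f.injective (h.trans hfa.symm))⟩
      · rintro ⟨h1, h2⟩
        exact ⟨fun h => h1 (h ▸ hfz), fun h => h2 (h ▸ hfa)⟩
    refine ⟨MulEquiv.mk' (Equiv.mk
      (fun f => Equiv.Perm.subtypePerm (f : Equiv.Perm D0) (fun x => (hpres f f.2 x).symm))
      (fun g => ⟨g.extendDomain (Equiv.refl _), ?_⟩) ?_ ?_) ?_⟩
    · -- extendDomain lands in the automorphism group
      rw [hmem]
      constructor
      · apply Equiv.Perm.extendDomain_apply_not_subtype
        simp [hS]
      · apply Equiv.Perm.extendDomain_apply_not_subtype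
        simp [hS]
    · -- left inverse
      intro f
      apply Subtype.ext
      apply Equiv.ext
      intro x
      by_cases hx : x ∈ S
      · exact Equiv.Perm.extendDomain_apply_subtype _ _ hx
      · rw [Equiv.Perm.extendDomain_apply_not_subtype _ _ hx]
        simp only [hS, Set.mem_compl_iff, not_not] at hx
        obtain ⟨hfz, hfa⟩ := (hmem f).mp f.2
        rcases hx with h | h
        · rw [h, hfz]
        · simp only [Set.mem_singleton_iff] at h
          rw [h, hfa]
    · -- right inverse
      intro g
      apply Equiv.ext
      intro x
      exact Subtype.ext (Equiv.Perm.extendDomain_apply_subtype _ _ x.2)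
    · -- multiplicativity
      intro f g
      rfl
end
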